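/- Let p be an odd prime, L = ⟨−1,2⟩ ≤ (Z/pZ)^×, and suppose ℓ = [(Z/pZ)^× : L] is an odd prime. Fix a primitive root g of Z/pZ and set A(i,j) = |(1 + g^i L) ∩ g^j L|. Then the number of squares in 1 + L equals (1/2)(1 + A(0,0) + Σ_{1 ≤ i ≤ ℓ−1} A(i, 2i)). -/

import Mathlib

open Set

/-- The coset `g^i H` viewed as a subset of `ZMod p`. -/
def coset (p : ℕ) (g : (ZMod p)ˣ) (H : Subgroup (ZMod p)ˣ) (i : ℤ) : Set (ZMod p) :=
  (fun h : (ZMod p)ˣ => ((g ^ i * h : (ZMod p)ˣ) : ZMod p)) '' (H : Set (ZMod p)ˣ)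

/-- The cyclotomic number `A(i,j) = |(1 + g^i H) ∩ g^j H|`. -/
noncomputable def cyc (p : ℕ) (g : (ZMod p)ˣ) (H : Subgroup (ZMod p)ˣ) (i j : ℤ) : ℕ :=
  (((fun x => 1 + x) '' coset p g H i) ∩ coset p g H j).ncard

private lemma ncard_biUnion_aux {α β : Type*} [Finite α] [DecidableEq β] (s : Finset β)
    (f : β → Set α)
    (hdisj : ∀ b ∈ s, ∀ c ∈ s, b ≠ c → Disjoint (f b) (f c)) :
    (⋃ b ∈ s, f b).ncard = ∑ b ∈ s, (f b).ncard := by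
  induction s using Finset.induction_on with
  | empty => simp
  | @insert a s ha ih =>
    rw [Finset.set_biUnion_insert, Finset.sum_insert ha,
      Set.ncard_union_eq ?_ (Set.toFinite _) (Set.toFinite _),
      ih (fun b hb c hc hbc => hdisj b (Finset.mem_insert_of_mem hb)
        c (Finset.mem_insert_of_mem hc) hbc)]
    simp only [Set.disjoint_iUnion_right]
    intro b hb
    exact hdisj a (Finset.mem_insert_self a s) b (Finset.mem_insert_of_mem hb)
      (fun h => ha (h ▸ hb))

private lemma gpow_mem_iff_aux {G : Type*} [CommGroup G] [Finite G] (L : Subgroup G)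
    (g : G) (hg : ∀ x, x ∈ Subgroup.zpowers g) (m : ℤ) :
    g ^ m ∈ L ↔ (L.index : ℤ) ∣ m := by
  have hsurj : ∀ x : G ⧸ L, x ∈ Subgroup.zpowers (QuotientGroup.mk g : G ⧸ L) := by
    intro x
    obtain ⟨y, rfl⟩ := QuotientGroup.mk_surjective x
    obtain ⟨n, rfl⟩ := Subgroup.mem_zpowers_iff.mp (hg y)
    exact Subgroup.mem_zpowers_iff.mpr ⟨n, (QuotientGroup.mk_zpow L g n).symm⟩
  have hord : orderOf (QuotientGroup.mk g : G ⧸ L) = Nat.card (G ⧸ L) :=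
    orderOf_eq_card_of_forall_mem_zpowers hsurj
  have hindex : L.index = orderOf (QuotientGroup.mk g : G ⧸ L) := by
    rw [hord, Subgroup.index_eq_card]
  rw [hindex, ← QuotientGroup.eq_one_iff (g ^ m), QuotientGroup.mk_zpow L,
    orderOf_dvd_iff_zpow_eq_one]

theorem stmt_12 (p : ℕ) [Fact p.Prime] (hodd : Odd p)
    (u : (ZMod p)ˣ) (hu : (u : ZMod p) = 2)
    (L : Subgroup (ZMod p)ˣ) (hL : L = Subgroup.closure {-1, u})
    (ℓ : ℕ) (hℓ : L.index = ℓ) (hℓp : ℓ.Prime) (hℓodd : Odd ℓ)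
    (g : (ZMod p)ˣ) (hg : ∀ x : (ZMod p)ˣ, x ∈ Subgroup.zpowers g) :
    2 * ({x ∈ (fun h : (ZMod p)ˣ => 1 + (h : ZMod p)) '' (L : Set (ZMod p)ˣ) |
            IsSquare x}).ncard
      = 1 + cyc p g L 0 0 + ∑ i ∈ Finset.Icc 1 (ℓ - 1), cyc p g L (i : ℤ) (2 * (i : ℤ)) := by
  classical
  have hp : p.Prime := Fact.out
  haveI : NeZero p := ⟨hp.ne_zero⟩
  -- basic membership facts
  have hm1 : (-1 : (ZMod p)ˣ) ∈ L := by
    rw [hL]; exact Subgroup.subset_closure (by simp)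
  have huL : u ∈ L := by
    rw [hL]; exact Subgroup.subset_closure (by simp)
  have hvi : Function.Injective (fun h : (ZMod p)ˣ => (h : ZMod p)) := fun _ _ h => Units.ext h
  set Lv : Set (ZMod p) := (fun h : (ZMod p)ˣ => (h : ZMod p)) '' (L : Set (ZMod p)ˣ)
    with hLvdef
  have hm1v : (-1 : ZMod p) ∈ Lv := ⟨-1, hm1, by simp⟩
  have hLv0 : (0 : ZMod p) ∉ Lv := by
    rintro ⟨h, _, e⟩; exact Units.ne_zero h e
  have hmulLv : ∀ w : (ZMod p)ˣ, w ∈ L → ∀ x : ZMod p,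
      ((w : ZMod p) * x ∈ Lv ↔ x ∈ Lv) := by
    intro w hw x
    constructor
    · rintro ⟨h, hh, e⟩
      refine ⟨w⁻¹ * h, mul_mem (inv_mem hw) hh, ?_⟩
      have h1 : ((w⁻¹ : (ZMod p)ˣ) : ZMod p) * (w : ZMod p) = 1 := by
        rw [← Units.val_mul]; simp
      have e' : (h : ZMod p) = (w : ZMod p) * x := e
      show ((w⁻¹ * h : (ZMod p)ˣ) : ZMod p) = x
      rw [Units.val_mul, e']
      linear_combination x * h1
    · rintro ⟨h, hh, e⟩
      refine ⟨w * h, mul_mem hw hh, ?_⟩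
      show ((w * h : (ZMod p)ˣ) : ZMod p) = (w : ZMod p) * x
      rw [Units.val_mul, show ((h : (ZMod p)ˣ) : ZMod p) = x from e]
  have hLvUnit : ∀ t : (ZMod p)ˣ, ((t : ZMod p) ∈ Lv ↔ t ∈ L) := by
    intro t
    constructor
    · rintro ⟨h, hh, e⟩; rwa [← hvi e]
    · intro h; exact ⟨t, h, rfl⟩
  -- coset membership characterizations
  have hmem_coset : ∀ (j : ℤ) (x : ZMod p),
      x ∈ coset p g L j ↔ (((g ^ j)⁻¹ : (ZMod p)ˣ) : ZMod p) * x ∈ Lv := by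
    intro j x
    constructor
    · rintro ⟨h, hh, rfl⟩
      refine ⟨h, hh, ?_⟩
      show ((h : (ZMod p)ˣ) : ZMod p)
          = (((g ^ j)⁻¹ : (ZMod p)ˣ) : ZMod p) * ((g ^ j * h : (ZMod p)ˣ) : ZMod p)
      rw [← Units.val_mul]
      congr 1
      group
    · rintro ⟨h, hh, e⟩
      refine ⟨h, hh, ?_⟩
      have e' : ((h : (ZMod p)ˣ) : ZMod p) = (((g ^ j)⁻¹ : (ZMod p)ˣ) : ZMod p) * x := e
      show ((g ^ j * h : (ZMod p)ˣ) : ZMod p) = x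
      rw [Units.val_mul, e', ← mul_assoc, ← Units.val_mul, mul_inv_cancel,
        Units.val_one, one_mul]
  have hmem_coset_unit : ∀ (j : ℤ) (t : (ZMod p)ˣ),
      (t : ZMod p) ∈ coset p g L j ↔ (g ^ j)⁻¹ * t ∈ L := by
    intro j t
    rw [hmem_coset, ← Units.val_mul, hLvUnit]
  -- cyclotomic numbers as unit-level counts
  have cyc_eq : ∀ i j : ℤ, cyc p g L i j =
      {t : (ZMod p)ˣ | (t : ZMod p) ∈ coset p g L i
        ∧ 1 + (t : ZMod p) ∈ coset p g L j}.ncard := by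
    intro i j
    unfold cyc
    rw [← Set.image_inter_preimage (fun x => 1 + x) (coset p g L i) (coset p g L j),
      Set.ncard_image_of_injective _ (add_right_injective 1)]
    have hset : coset p g L i ∩ (fun x => 1 + x) ⁻¹' (coset p g L j)
        = (fun t : (ZMod p)ˣ => (t : ZMod p)) ''
          {t : (ZMod p)ˣ | (t : ZMod p) ∈ coset p g L i
            ∧ 1 + (t : ZMod p) ∈ coset p g L j} := by
      ext x
      constructor
      · rintro ⟨hx1, hx2⟩
        obtain ⟨h, hh, rfl⟩ := hx1
        exact ⟨g ^ i * h, ⟨⟨h, hh, rfl⟩, hx2⟩, rfl⟩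
      · rintro ⟨t, ⟨h1, h2⟩, rfl⟩
        exact ⟨h1, h2⟩
    rw [hset, Set.ncard_image_of_injective _ hvi]
  -- order of g modulo L
  have hgL : ∀ m : ℤ, g ^ m ∈ L ↔ (ℓ : ℤ) ∣ m := by
    intro m; rw [← hℓ]; exact gpow_mem_iff_aux L g hg m
  -- key condition transfer
  have key_cond : ∀ (i : ℤ) (t : (ZMod p)ˣ), (g ^ i)⁻¹ * t ∈ L →
      (1 + (t : ZMod p) ∈ coset p g L (2 * i) ↔
        ((t⁻¹ : (ZMod p)ˣ) : ZMod p) * (((t⁻¹ : (ZMod p)ˣ) : ZMod p) + 1) ∈ Lv) := by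
    intro i t hwL
    rw [hmem_coset]
    set w : (ZMod p)ˣ := (g ^ i)⁻¹ * t with hw
    have hwt : w * t⁻¹ = (g ^ i)⁻¹ := by
      rw [hw, mul_assoc, mul_inv_cancel, mul_one]
    have hg2 : (g ^ (2 * i))⁻¹ = (w * w) * (t⁻¹ * t⁻¹) := by
      calc (g ^ (2 * i))⁻¹ = (g ^ i * g ^ i)⁻¹ := by rw [← zpow_add, two_mul]
        _ = (g ^ i)⁻¹ * (g ^ i)⁻¹ := mul_inv _ _
        _ = (w * t⁻¹) * (w * t⁻¹) := by rw [hwt]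
        _ = (w * w) * (t⁻¹ * t⁻¹) := mul_mul_mul_comm _ _ _ _
    have h1 : ((t⁻¹ : (ZMod p)ˣ) : ZMod p) * (t : ZMod p) = 1 := by
      rw [← Units.val_mul]; simp
    have hcalc : (((g ^ (2 * i))⁻¹ : (ZMod p)ˣ) : ZMod p) * (1 + (t : ZMod p))
        = ((w * w : (ZMod p)ˣ) : ZMod p)
          * (((t⁻¹ : (ZMod p)ˣ) : ZMod p) * (((t⁻¹ : (ZMod p)ˣ) : ZMod p) + 1)) := by
      rw [hg2]
      simp only [Units.val_mul]
      linear_combination ((w : ZMod p) * (w : ZMod p) * ((t⁻¹ : (ZMod p)ˣ) : ZMod p)) * h1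
    rw [hcalc]
    exact hmulLv (w * w) (mul_mem hwL hwL) _
  -- the unit-level sets
  set Du : ℕ → Set (ZMod p)ˣ := fun i =>
    {t : (ZMod p)ˣ | (t : ZMod p) ∈ coset p g L (i : ℤ)
      ∧ 1 + (t : ZMod p) ∈ coset p g L (2 * (i : ℤ))} with hDu
  set Vu : Set (ZMod p)ˣ :=
    {t : (ZMod p)ˣ | ((t⁻¹ : (ZMod p)ˣ) : ZMod p) * (((t⁻¹ : (ZMod p)ˣ) : ZMod p) + 1) ∈ Lv}
    with hVu
  have hℓpos : 0 < ℓ := hℓp.pos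
  -- coverage
  have hcover : Vu = ⋃ i ∈ Finset.range ℓ, Du i := by
    ext t
    simp only [hVu, hDu, Set.mem_iUnion, Set.mem_setOf_eq, exists_prop, Finset.mem_range]
    constructor
    · intro ht
      obtain ⟨k, hk⟩ := Subgroup.mem_zpowers_iff.mp (hg t)
      have h0 : (0 : ℤ) ≤ k % ℓ := Int.emod_nonneg k (by exact_mod_cast hℓpos.ne')
      have h1 : k % ℓ < ℓ := Int.emod_lt_of_pos k (by exact_mod_cast hℓpos)
      have hcast : (((k % ℓ).toNat : ℕ) : ℤ) = k % ℓ := Int.toNat_of_nonneg h0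
      have hmemL : (g ^ ((((k % ℓ).toNat : ℕ)) : ℤ))⁻¹ * t ∈ L := by
        rw [← hk]
        have heq : (g ^ ((((k % ℓ).toNat : ℕ)) : ℤ))⁻¹ * g ^ k = g ^ (k - k % ℓ) := by
          rw [hcast, ← zpow_neg, ← zpow_add]
          congr 1
          ring
        rw [heq, hgL]
        exact ⟨k / ℓ, by have := Int.mul_ediv_add_emod k ℓ; omega⟩
      refine ⟨(k % ℓ).toNat, by omega, ?_, ?_⟩
      · rw [hmem_coset_unit]
        exact hmemL
      · exact (key_cond _ t hmemL).mpr ht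
    · rintro ⟨i, _, h1, h2⟩
      exact (key_cond (i : ℤ) t ((hmem_coset_unit _ _).mp h1)).mp h2
  -- disjointness
  have hdisj : ∀ i ∈ Finset.range ℓ, ∀ j ∈ Finset.range ℓ, i ≠ j →
      Disjoint (Du i) (Du j) := by
    intro i hi j hj hij
    rw [Finset.mem_range] at hi hj
    rw [Set.disjoint_left]
    rintro t ⟨ht1, _⟩ ⟨ht2, _⟩
    rw [hmem_coset_unit] at ht1 ht2
    have hmem : g ^ ((j : ℤ) - (i : ℤ)) ∈ L := by
      have heq : g ^ ((j : ℤ) - (i : ℤ))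
          = ((g ^ (i : ℤ))⁻¹ * t) * ((g ^ (j : ℤ))⁻¹ * t)⁻¹ := by
        group
      rw [heq]
      exact mul_mem ht1 (inv_mem ht2)
    have hdvd := (hgL _).mp hmem
    have : (j : ℤ) - (i : ℤ) = 0 :=
      Int.eq_zero_of_dvd_of_natAbs_lt_natAbs hdvd (by omega)
    omega
  -- Step C sums
  have hVcard : Vu.ncard = ∑ i ∈ Finset.range ℓ, cyc p g L (i : ℤ) (2 * (i : ℤ)) := by
    rw [hcover, ncard_biUnion_aux _ _ hdisj]
    exact Finset.sum_congr rfl fun i _ => (cyc_eq (i : ℤ) (2 * (i : ℤ))).symm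
  -- value-level to unit level
  set W : Set (ZMod p) := {s : ZMod p | s * (s + 1) ∈ Lv} with hW
  have hWcard : W.ncard = Vu.ncard := by
    have hWu : W = (fun t : (ZMod p)ˣ => (t : ZMod p)) ''
        {s : (ZMod p)ˣ | (s : ZMod p) * ((s : ZMod p) + 1) ∈ Lv} := by
      ext x
      constructor
      · intro hx
        have hx0 : x ≠ 0 := by
          rintro rfl
          rw [hW, Set.mem_setOf_eq, zero_mul] at hx
          exact hLv0 hx
        obtain ⟨t, rfl⟩ := (isUnit_iff_ne_zero.mpr hx0)
        exact ⟨t, hx, rfl⟩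
      · rintro ⟨t, ht, rfl⟩; exact ht
    have hWuVu : {s : (ZMod p)ˣ | (s : ZMod p) * ((s : ZMod p) + 1) ∈ Lv}
        = Inv.inv '' Vu := by
      ext s
      constructor
      · intro hs
        refine ⟨s⁻¹, ?_, inv_inv s⟩
        show (((s⁻¹)⁻¹ : (ZMod p)ˣ) : ZMod p) * ((((s⁻¹)⁻¹ : (ZMod p)ˣ) : ZMod p) + 1) ∈ Lv
        rw [inv_inv]
        exact hs
      · rintro ⟨t, ht, rfl⟩
        exact ht
    rw [hWu, Set.ncard_image_of_injective _ hvi, hWuVu,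
      Set.ncard_image_of_injective _ inv_injective]
  -- Step B : T ↔ W
  set T : Set (ZMod p) := {y : ZMod p | y ^ 2 - 1 ∈ Lv} with hT
  have huu : (u : ZMod p) * ((u⁻¹ : (ZMod p)ˣ) : ZMod p) = 1 := by
    rw [← Units.val_mul]; simp
  have key2 : ∀ s : ZMod p,
      ((u : ZMod p) * s + 1) ^ 2 - 1 = ((u * u : (ZMod p)ˣ) : ZMod p) * (s * (s + 1)) := by
    intro s
    rw [Units.val_mul, hu]; ring
  have hTW : T = (fun s => (u : ZMod p) * s + 1) '' W := by
    ext y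
    constructor
    · intro hy
      set s : ZMod p := ((u⁻¹ : (ZMod p)ˣ) : ZMod p) * (y - 1) with hs
      have hys : y = (u : ZMod p) * s + 1 := by
        rw [hs]; linear_combination (1 - y) * huu
      refine ⟨s, ?_, hys.symm⟩
      rw [hW, Set.mem_setOf_eq, ← (hmulLv (u * u) (mul_mem huL huL) _), ← key2, ← hys]
      exact hy
    · rintro ⟨s, hs, rfl⟩
      show ((u : ZMod p) * s + 1) ^ 2 - 1 ∈ Lv
      rw [key2]
      exact (hmulLv (u * u) (mul_mem huL huL) _).mpr hs
  have hTcard : T.ncard = W.ncard := by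
    rw [hTW]
    refine Set.ncard_image_of_injective _ ?_
    intro a b hab
    simp only at hab
    have h2 : (u : ZMod p) * a = (u : ZMod p) * b := by linear_combination hab
    exact mul_left_cancel₀ (Units.ne_zero u) h2
  -- Step A : squares
  set S₀ : Set (ZMod p) := {x : ZMod p | x - 1 ∈ Lv ∧ IsSquare x ∧ x ≠ 0} with hS₀
  set T₀ : Set (ZMod p) := {y : ZMod p | y ^ 2 - 1 ∈ Lv ∧ y ≠ 0} with hT₀
  have h2ne : (2 : ZMod p) ≠ 0 := hu ▸ Units.ne_zero u
  -- square root function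
  have hrex : ∀ x : ZMod p, IsSquare x → ∃ r : ZMod p, r * r = x := by
    rintro x ⟨r, rfl⟩; exact ⟨r, rfl⟩
  choose! r hr using hrex
  have hT₀eq : T₀ = r '' S₀ ∪ (fun x => - r x) '' S₀ := by
    ext y
    constructor
    · rintro ⟨hy1, hy2⟩
      have hsq : IsSquare (y ^ 2) := ⟨y, sq y⟩
      have hxS : y ^ 2 ∈ S₀ := ⟨hy1, hsq, pow_ne_zero 2 hy2⟩
      have hryy : r (y ^ 2) * r (y ^ 2) = y * y := by rw [hr _ hsq, sq]
      rcases mul_self_eq_mul_self_iff.mp hryy with h | h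
      · exact Or.inl ⟨y ^ 2, hxS, h⟩
      · refine Or.inr ⟨y ^ 2, hxS, ?_⟩
        show - r (y ^ 2) = y
        rw [h, neg_neg]
    · rintro (⟨x, hx, rfl⟩ | ⟨x, hx, rfl⟩)
      · have hrx := hr x hx.2.1
        refine ⟨by rw [sq, hrx]; exact hx.1, ?_⟩
        intro h0
        exact hx.2.2 (by rw [← hrx, h0, mul_zero])
      · have hrx := hr x hx.2.1
        constructor
        · show (- r x) ^ 2 - 1 ∈ Lv
          have : (- r x) ^ 2 = r x * r x := by ring
          rw [this, hrx]
          exact hx.1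
        · show - r x ≠ 0
          simp only [neg_ne_zero]
          intro h0
          exact hx.2.2 (by rw [← hrx, h0, mul_zero])
  have hinjr : Set.InjOn r S₀ := by
    intro a ha b hb hab
    rw [← hr a ha.2.1, ← hr b hb.2.1, hab]
  have hinjnr : Set.InjOn (fun x => - r x) S₀ := by
    intro a ha b hb hab
    simp only [neg_inj] at hab
    exact hinjr ha hb hab
  have hdisjr : Disjoint (r '' S₀) ((fun x => - r x) '' S₀) := by
    rw [Set.disjoint_left]
    rintro y ⟨x, hx, rfl⟩ ⟨x', hx', he⟩
    simp only at he
    have h1 : x' = x := by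
      rw [← hr x hx.2.1, ← hr x' hx'.2.1, ← he]
      ring
    rw [h1] at he
    have h2 : (2 : ZMod p) * r x = 0 := by linear_combination - he
    have h3 : r x = 0 := by
      rcases mul_eq_zero.mp h2 with h | h
      · exact absurd h h2ne
      · exact h
    exact hx.2.2 (by rw [← hr x hx.2.1, h3, mul_zero])
  have hT₀card : T₀.ncard = 2 * S₀.ncard := by
    rw [hT₀eq, Set.ncard_union_eq hdisjr (Set.toFinite _) (Set.toFinite _),
      Set.ncard_image_of_injOn hinjr, Set.ncard_image_of_injOn hinjnr]
    ring
  have h0T₀ : (0 : ZMod p) ∉ T₀ := fun h => h.2 rfl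
  have h0S₀ : (0 : ZMod p) ∉ S₀ := fun h => h.2.2 rfl
  have hTins : T = insert 0 T₀ := by
    ext y
    simp only [hT, hT₀, Set.mem_insert_iff, Set.mem_setOf_eq]
    constructor
    · intro h
      rcases eq_or_ne y 0 with rfl | hy
      · exact Or.inl rfl
      · exact Or.inr ⟨h, hy⟩
    · rintro (rfl | ⟨h, _⟩)
      · simpa using hm1v
      · exact h
  have hSins : {x ∈ (fun h : (ZMod p)ˣ => 1 + (h : ZMod p)) '' (L : Set (ZMod p)ˣ) |
      IsSquare x} = insert 0 S₀ := by
    ext x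
    simp only [Set.mem_sep_iff, Set.mem_image, SetLike.mem_coe, Set.mem_insert_iff,
      hS₀, Set.mem_setOf_eq]
    constructor
    · rintro ⟨⟨h, hh, e⟩, hsq⟩
      rcases eq_or_ne x 0 with rfl | hx
      · exact Or.inl rfl
      · exact Or.inr ⟨⟨h, hh, by rw [← e]; ring⟩, hsq, hx⟩
    · rintro (rfl | ⟨⟨h, hh, e⟩, hsq, _⟩)
      · exact ⟨⟨-1, hm1, by simp⟩, ⟨0, (mul_zero 0).symm⟩⟩
      · refine ⟨⟨h, hh, ?_⟩, hsq⟩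
        show 1 + ((h : (ZMod p)ˣ) : ZMod p) = x
        rw [show ((h : (ZMod p)ˣ) : ZMod p) = x - 1 from e]
        ring
  -- conclusion
  rw [hSins, Set.ncard_insert_of_notMem h0S₀ (Set.toFinite _)]
  have hTcount : T.ncard = T₀.ncard + 1 := by
    rw [hTins, Set.ncard_insert_of_notMem h0T₀ (Set.toFinite _)]
  have hsplit : Finset.range ℓ = insert 0 (Finset.Icc 1 (ℓ - 1)) := by
    ext x
    simp only [Finset.mem_range, Finset.mem_insert, Finset.mem_Icc]
    omega
  have h0notin : (0 : ℕ) ∉ Finset.Icc 1 (ℓ - 1) := by simp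
  have hfinal : T.ncard = cyc p g L 0 0
      + ∑ i ∈ Finset.Icc 1 (ℓ - 1), cyc p g L (i : ℤ) (2 * (i : ℤ)) := by
    rw [hTcard, hWcard, hVcard, hsplit, Finset.sum_insert h0notin]
    norm_num
  omega
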